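/- Let C be a category with finite products and a terminal object 1 in which every binary product projection is a regular epimorphism. Then binary products in C are co-disjoint: for any objects X and Y, the square consisting of the projections π₁ : X × Y → X, π₂ : X × Y → Y and the terminal morphisms X → 1, Y → 1 is a pushout. -/

import Mathlib

open CategoryTheory CategoryTheory.Limits

universe v u

variable {C : Type u} [Category.{v} C]

/-- `i₁ : X₁ ⟶ X` and `i₂ : X₂ ⟶ X` form a binary coproduct diagram. -/
def IsCoprodDiagram {X₁ X₂ X : C} (i₁ : X₁ ⟶ X) (i₂ : X₂ ⟶ X) : Prop :=
  Nonempty (IsColimit (BinaryCofan.mk i₁ i₂))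

/-- `p₁ : X ⟶ X₁` and `p₂ : X ⟶ X₂` form a binary product diagram. -/
def IsProdDiagram {X X₁ X₂ : C} (p₁ : X ⟶ X₁) (p₂ : X ⟶ X₂) : Prop :=
  Nonempty (IsLimit (BinaryFan.mk p₁ p₂))

/-- Condition (E1): pullbacks of `f` along both inclusions of any binary coproduct diagram
exist and the resulting legs form a binary coproduct diagram. -/
def SatE1 {A X : C} (f : A ⟶ X) : Prop :=
  ∀ {X₁ X₂ : C} (x₁ : X₁ ⟶ X) (x₂ : X₂ ⟶ X), IsCoprodDiagram x₁ x₂ →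
    ∃ (A₁ A₂ : C) (a₁ : A₁ ⟶ A) (a₂ : A₂ ⟶ A) (f₁ : A₁ ⟶ X₁) (f₂ : A₂ ⟶ X₂),
      IsPullback a₁ f₁ f x₁ ∧ IsPullback a₂ f₂ f x₂ ∧ IsCoprodDiagram a₁ a₂

/-- Condition (E2): in any commutative diagram over `f` whose rows are binary coproduct
diagrams, both squares are pullbacks. -/
def SatE2 {A X : C} (f : A ⟶ X) : Prop :=
  ∀ {A₁ A₂ X₁ X₂ : C} (a₁ : A₁ ⟶ A) (a₂ : A₂ ⟶ A) (x₁ : X₁ ⟶ X) (x₂ : X₂ ⟶ X)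
    (f₁ : A₁ ⟶ X₁) (f₂ : A₂ ⟶ X₂),
    a₁ ≫ f = f₁ ≫ x₁ → a₂ ≫ f = f₂ ≫ x₂ →
    IsCoprodDiagram x₁ x₂ → IsCoprodDiagram a₁ a₂ →
    IsPullback a₁ f₁ f x₁ ∧ IsPullback a₂ f₂ f x₂

/-- A morphism is extensive if it satisfies (E1) and (E2). -/
def Extensive {A X : C} (f : A ⟶ X) : Prop := SatE1 f ∧ SatE2 f

/-- Condition (C1): pushouts of `f` along both projections of any binary product diagram
exist and the resulting legs form a binary product diagram. -/
def SatC1 {A X : C} (f : A ⟶ X) : Prop :=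
  ∀ {A₁ A₂ : C} (p₁ : A ⟶ A₁) (p₂ : A ⟶ A₂), IsProdDiagram p₁ p₂ →
    ∃ (X₁ X₂ : C) (q₁ : X ⟶ X₁) (q₂ : X ⟶ X₂) (f₁ : A₁ ⟶ X₁) (f₂ : A₂ ⟶ X₂),
      IsPushout p₁ f f₁ q₁ ∧ IsPushout p₂ f f₂ q₂ ∧ IsProdDiagram q₁ q₂

/-- Condition (C2): in any commutative diagram over `f` whose rows are binary product
diagrams, both squares are pushouts. -/
def SatC2 {A X : C} (f : A ⟶ X) : Prop :=
  ∀ {A₁ A₂ X₁ X₂ : C} (p₁ : A ⟶ A₁) (p₂ : A ⟶ A₂) (q₁ : X ⟶ X₁) (q₂ : X ⟶ X₂)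
    (f₁ : A₁ ⟶ X₁) (f₂ : A₂ ⟶ X₂),
    p₁ ≫ f₁ = f ≫ q₁ → p₂ ≫ f₂ = f ≫ q₂ →
    IsProdDiagram p₁ p₂ → IsProdDiagram q₁ q₂ →
    IsPushout p₁ f f₁ q₁ ∧ IsPushout p₂ f f₂ q₂

/-- A morphism is coextensive if it satisfies (C1) and (C2). -/
def Coextensive {A X : C} (f : A ⟶ X) : Prop := SatC1 f ∧ SatC2 f

/-- A coproduct inclusion: a morphism admitting a complementary inclusion forming
a binary coproduct diagram. -/
def IsCoprodInclusion {A X : C} (ι : A ⟶ X) : Prop :=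
  ∃ (A' : C) (ι' : A' ⟶ X), IsCoprodDiagram ι ι'

/-- An extremal epimorphism: whenever `e = i ≫ m` with `m` a monomorphism, `m` is an
isomorphism. -/
def IsExtremalEpi {A B : C} (e : A ⟶ B) : Prop :=
  ∀ {I : C} (i : A ⟶ I) (m : I ⟶ B), Mono m → i ≫ m = e → IsIso m

/-- The binary strict refinement property for an object `X`. -/
def BinaryStrictRefinement (X : C) : Prop :=
  ∀ {A₁ A₂ B₁ B₂ : C} (a₁ : X ⟶ A₁) (a₂ : X ⟶ A₂) (b₁ : X ⟶ B₁) (b₂ : X ⟶ B₂),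
    IsProdDiagram a₁ a₂ → IsProdDiagram b₁ b₂ →
    ∃ (C₁₁ C₁₂ C₂₁ C₂₂ : C)
      (α₁₁ : A₁ ⟶ C₁₁) (α₁₂ : A₁ ⟶ C₁₂) (α₂₁ : A₂ ⟶ C₂₁) (α₂₂ : A₂ ⟶ C₂₂)
      (β₁₁ : B₁ ⟶ C₁₁) (β₁₂ : B₂ ⟶ C₁₂) (β₂₁ : B₁ ⟶ C₂₁) (β₂₂ : B₂ ⟶ C₂₂),
      a₁ ≫ α₁₁ = b₁ ≫ β₁₁ ∧ a₁ ≫ α₁₂ = b₂ ≫ β₁₂ ∧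
      a₂ ≫ α₂₁ = b₁ ≫ β₂₁ ∧ a₂ ≫ α₂₂ = b₂ ≫ β₂₂ ∧
      IsProdDiagram α₁₁ α₁₂ ∧ IsProdDiagram α₂₁ α₂₂ ∧
      IsProdDiagram β₁₁ β₂₁ ∧ IsProdDiagram β₁₂ β₂₂

/-- A jointly monomorphic pair which is a reflexive, symmetric and transitive relation. -/
def IsEquivalenceRelationPair {R X : C} (r₁ r₂ : R ⟶ X) : Prop :=
  (∀ {T : C} (a b : T ⟶ R), a ≫ r₁ = b ≫ r₁ → a ≫ r₂ = b ≫ r₂ → a = b) ∧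
  (∃ d : X ⟶ R, d ≫ r₁ = 𝟙 X ∧ d ≫ r₂ = 𝟙 X) ∧
  (∃ s : R ⟶ R, s ≫ r₁ = r₂ ∧ s ≫ r₂ = r₁) ∧
  (∀ {P : C} (p₁ p₂ : P ⟶ R), IsPullback p₁ p₂ r₂ r₁ →
    ∃ t : P ⟶ R, t ≫ r₁ = p₁ ≫ r₁ ∧ t ≫ r₂ = p₂ ≫ r₂)

/-- If every binary product projection is a regular epimorphism, then binary products are
co-disjoint: the square of projections and terminal morphisms is a pushout. -/
theorem products_codisjoint [HasFiniteProducts C]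
    (hproj : ∀ {P X₁ X₂ : C} (p₁ : P ⟶ X₁) (p₂ : P ⟶ X₂),
      IsProdDiagram p₁ p₂ → Nonempty (RegularEpi p₁) ∧ Nonempty (RegularEpi p₂))
    (X Y : C) :
    IsPushout (Limits.prod.fst : X ⨯ Y ⟶ X) (Limits.prod.snd : X ⨯ Y ⟶ Y)
      (terminal.from X) (terminal.from Y) := by
  classical
  -- `fst, snd` is a product diagram
  have hPD : IsProdDiagram (Limits.prod.fst : X ⨯ Y ⟶ X) (Limits.prod.snd : X ⨯ Y ⟶ Y) :=
    ⟨prodIsProd X Y⟩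
  -- `(𝟙 P, terminal.from P)` is a product diagram for any P
  have htd : ∀ (P : C), IsProdDiagram (𝟙 P) (terminal.from P) := fun P =>
    ⟨BinaryFan.isLimitMk (fun s => s.fst) (fun s => Category.comp_id _)
      (fun s => Subsingleton.elim _ _)
      (fun s m h₁ _ => by simpa using h₁)⟩
  -- epis
  obtain ⟨⟨re1⟩, ⟨re2⟩⟩ := hproj (Limits.prod.fst : X ⨯ Y ⟶ X) Limits.prod.snd hPD
  have epi1 : Epi (Limits.prod.fst : X ⨯ Y ⟶ X) := @RegularEpi.epi _ _ _ _ _ re1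
  have epi2 : Epi (Limits.prod.snd : X ⨯ Y ⟶ Y) := @RegularEpi.epi _ _ _ _ _ re2
  obtain ⟨-, ⟨reX⟩⟩ := hproj (𝟙 X) (terminal.from X) (htd X)
  have epiX : Epi (terminal.from X) := @RegularEpi.epi _ _ _ _ _ reX
  obtain ⟨-, ⟨ret⟩⟩ := hproj (𝟙 (X ⨯ Y)) (terminal.from (X ⨯ Y)) (htd (X ⨯ Y))
  have hw : (Limits.prod.fst : X ⨯ Y ⟶ X) ≫ terminal.from X =
      Limits.prod.snd ≫ terminal.from Y := Subsingleton.elim _ _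
  have hfromXY : ∀ {T : C} (v : T ⟶ X ⨯ Y), v ≫ terminal.from (X ⨯ Y) = terminal.from T :=
    fun v => Subsingleton.elim _ _
  -- the key lemma
  have key : ∀ (s : PushoutCocone (Limits.prod.fst : X ⨯ Y ⟶ X) Limits.prod.snd)
      {T : C} (u : T ⟶ X) (w : T ⟶ Y), u ≫ s.inl = w ≫ s.inr := by
    intro s T u w
    have := Limits.prod.lift u w ≫= s.condition
    rw [← Category.assoc, ← Category.assoc, Limits.prod.lift_fst, Limits.prod.lift_snd] at this
    exact this
  have hfst : (Limits.prod.fst : X ⨯ Y ⟶ X) ≫ terminal.from X = terminal.from (X ⨯ Y) :=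
    Subsingleton.elim _ _
  have hsnd : (Limits.prod.snd : X ⨯ Y ⟶ Y) ≫ terminal.from Y = terminal.from (X ⨯ Y) :=
    Subsingleton.elim _ _
  have hd : ∀ (s : PushoutCocone (Limits.prod.fst : X ⨯ Y ⟶ X) Limits.prod.snd)
      (h : ret.left ≫ Limits.prod.fst ≫ s.inl = ret.right ≫ Limits.prod.fst ≫ s.inl),
      terminal.from (X ⨯ Y) ≫ Cofork.IsColimit.desc ret.isColimit (Limits.prod.fst ≫ s.inl) h
        = Limits.prod.fst ≫ s.inl :=
    fun s h => Cofork.IsColimit.π_desc' ret.isColimit _ h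
  apply IsPushout.of_isColimit' ⟨hw⟩
  have hcoeq : ∀ (s : PushoutCocone (Limits.prod.fst : X ⨯ Y ⟶ X) Limits.prod.snd),
      ret.left ≫ Limits.prod.fst ≫ s.inl = ret.right ≫ Limits.prod.fst ≫ s.inl := by
    intro s
    rw [← Category.assoc, ← Category.assoc,
      key s (ret.left ≫ Limits.prod.fst) (ret.left ≫ Limits.prod.snd),
      key s (ret.right ≫ Limits.prod.fst) (ret.left ≫ Limits.prod.snd)]
  have hfac₁ : ∀ (s : PushoutCocone (Limits.prod.fst : X ⨯ Y ⟶ X) Limits.prod.snd),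
      terminal.from X ≫ Cofork.IsColimit.desc ret.isColimit (Limits.prod.fst ≫ s.inl) (hcoeq s)
        = s.inl := by
    intro s
    rw [← cancel_epi (Limits.prod.fst : X ⨯ Y ⟶ X), ← Category.assoc, hfst, hd]
  refine PushoutCocone.IsColimit.mk hw
    (fun s => Cofork.IsColimit.desc ret.isColimit (Limits.prod.fst ≫ s.inl) (hcoeq s))
    hfac₁ ?_ ?_
  · intro s
    rw [← cancel_epi (Limits.prod.snd : X ⨯ Y ⟶ Y), ← Category.assoc, hsnd, hd]
    exact s.condition
  · intro s m hm₁ _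
    rw [← cancel_epi (terminal.from X), hm₁, hfac₁]
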